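/- (Theorem 1) Let n, Ξ be positive integers. Let A_c be an invertible n×n real matrix with ⟪v, A_c v⟫ ≤ −λ‖v‖² for all v ∈ ℝⁿ and some λ > 0. Let Γ be a symmetric positive definite Ξ×Ξ real matrix with μ‖v‖² ≤ ⟪v, Γ⁻¹v⟫ for all v ∈ ℝ^Ξ (μ > 0) and ‖Γ⁻¹‖ ≤ γ̄. Let ρ > 0, k_s, Φ'_M ≥ 0, Δ̄ ≥ 0, θ̄ ≥ 0 be real numbers, θ* ∈ ℝ^Ξ with ‖θ*‖ ≤ θ̄, and let e : [0,∞) → ℝⁿ, θ̂ : [0,∞) → ℝ^Ξ be differentiable with θ̃(t) = θ* − θ̂(t) and with Φ̂' : [0,∞) → ℝ^{n×Ξ}, Δ : [0,∞) → ℝⁿ satisfying ‖Φ̂'(t)‖ ≤ Φ'_M and ‖Δ(t)‖ ≤ Δ̄ for all t. Assume the closed-loop error dynamics ė(t) = A_c e(t) − k_s·sgn(e(t)) + Φ̂'(t)·θ̃(t) + Δ(t) and the adaptation law θ̂'(t) = −Γ·(A_c⁻¹Φ̂'(t))ᵀ·e(t) − ρ‖e(t)‖·θ̂(t). Define β₂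 = (Φ'_M·(‖A_c⁻¹‖ + 1) + ρ·γ̄·θ̄)/(2ρμ). If ρμ·β₂² + Δ̄ ≤ k_s, then e(t) → 0 as t → ∞ (asymptotic tracking error convergence). -/

import Mathlib

open scoped RealInnerProductSpace

/-- Componentwise sign function. -/
noncomputable def signVec {n : ℕ} (v : EuclideanSpace ℝ (Fin n)) :
    EuclideanSpace ℝ (Fin n) := WithLp.toLp 2 (fun i => Real.sign (v i))

lemma mvt_le_aux {f f' : ℝ → ℝ} {a b m : ℝ} (hab : a ≤ b)
    (hd : ∀ t ∈ Set.Icc a b, HasDerivAt f (f' t) t)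
    (hm : ∀ t ∈ Set.Icc a b, f' t ≤ m) : f b ≤ f a + m * (b - a) := by
  rcases eq_or_lt_of_le hab with rfl | hlt
  · simp
  · obtain ⟨c, hc, hc'⟩ := exists_hasDerivAt_eq_slope f f' hlt
      (fun t ht => (hd t ht).continuousAt.continuousWithinAt)
      (fun t ht => hd t ⟨ht.1.le, ht.2.le⟩)
    have hb : (0:ℝ) < b - a := sub_pos.2 hlt
    have h2 : (f b - f a) / (b - a) ≤ m := hc' ▸ hm c ⟨hc.1.le, hc.2.le⟩
    have := (div_le_iff₀ hb).1 h2
    linarith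

lemma mul_real_sign_self (x : ℝ) : x * Real.sign x = |x| := by
  rcases lt_trichotomy x 0 with h|h|h
  · simp [Real.sign_of_neg h, abs_of_neg h]
  · simp [h]
  · simp [Real.sign_of_pos h, abs_of_pos h]

lemma norm_le_inner_signVec {k : ℕ} (u : EuclideanSpace ℝ (Fin k)) :
    ‖u‖ ≤ ⟪u, signVec u⟫ := by
  have h1 : ⟪u, signVec u⟫ = ∑ i, |u i| := by
    simp only [PiLp.inner_apply, RCLike.inner_apply, conj_trivial, signVec]
    exact Finset.sum_congr rfl fun i _ => (mul_comm _ _).trans (mul_real_sign_self (u i))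
  rw [h1, EuclideanSpace.norm_eq]
  have h2 : ∑ i, ‖u i‖ ^ 2 ≤ (∑ i, |u i|) ^ 2 := by
    have := Finset.sum_sq_le_sq_sum_of_nonneg (s := Finset.univ)
      (f := fun i => |u i|) (fun i _ => abs_nonneg _)
    simpa [Real.norm_eq_abs, sq_abs] using this
  calc Real.sqrt (∑ i, ‖u i‖ ^ 2) ≤ Real.sqrt ((∑ i, |u i|) ^ 2) := Real.sqrt_le_sqrt h2
    _ = ∑ i, |u i| := Real.sqrt_sq (Finset.sum_nonneg fun i _ => abs_nonneg _)

lemma norm_signVec_le {k : ℕ} (v : EuclideanSpace ℝ (Fin k)) :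
    ‖signVec v‖ ≤ Real.sqrt k := by
  rw [EuclideanSpace.norm_eq]
  apply Real.sqrt_le_sqrt
  calc ∑ i, ‖signVec v i‖ ^ 2 ≤ ∑ _i : Fin k, (1:ℝ) := by
        apply Finset.sum_le_sum
        intro i _
        have h : |Real.sign (v i)| ≤ 1 := by
          rcases Real.sign_apply_eq (v i) with h|h|h <;> simp [signVec, h]
        calc ‖signVec v i‖ ^ 2 = |Real.sign (v i)| ^ 2 := by simp [signVec, Real.norm_eq_abs]
          _ ≤ 1 ^ 2 := pow_le_pow_left₀ (abs_nonneg _) h 2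
          _ = 1 := one_pow 2
    _ = (k : ℝ) := by simp

set_option maxHeartbeats 1000000 in
/-- Theorem 1 of the paper: asymptotic tracking error convergence.  For the closed-loop
error dynamics `ė = A_c e − k_s sgn(e) + Φ̂'θ̃ + Δ` (with `A_c` invertible and its symmetric
part negative definite) together with the adaptation law
`θ̂' = −Γ(A_c⁻¹Φ̂')ᵀe − ρ‖e‖θ̂`, the gain condition `ρμβ₂² + Δ̄ ≤ k_s` with
`β₂ = (Φ'_M(‖A_c⁻¹‖+1) + ργ̄θ̄)/(2ρμ)` ensures `e(t) → 0` as `t → ∞`.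
Invertible matrices are encoded as continuous linear equivalences of Euclidean space. -/
theorem tracking_error_asymptotic_convergence (n Ξ : ℕ) (hn : 0 < n) (hΞ : 0 < Ξ)
    (A_c : EuclideanSpace ℝ (Fin n) ≃L[ℝ] EuclideanSpace ℝ (Fin n))
    (lam : ℝ) (hlam : 0 < lam)
    (hAc : ∀ v : EuclideanSpace ℝ (Fin n), ⟪v, A_c v⟫ ≤ -lam * ‖v‖ ^ 2)
    (Γ : EuclideanSpace ℝ (Fin Ξ) ≃L[ℝ] EuclideanSpace ℝ (Fin Ξ))
    (hΓsymm : ∀ v w : EuclideanSpace ℝ (Fin Ξ), ⟪Γ v, w⟫ = ⟪v, Γ w⟫)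
    (hΓpos : ∀ v : EuclideanSpace ℝ (Fin Ξ), v ≠ 0 → 0 < ⟪v, Γ v⟫)
    (μ γbar : ℝ) (hμ : 0 < μ) (hγbar : 0 ≤ γbar)
    (hμΓ : ∀ v : EuclideanSpace ℝ (Fin Ξ), μ * ‖v‖ ^ 2 ≤ ⟪v, Γ.symm v⟫)
    (hΓinv : ‖(Γ.symm : EuclideanSpace ℝ (Fin Ξ) →L[ℝ] EuclideanSpace ℝ (Fin Ξ))‖ ≤ γbar)
    (ρ k_s ΦM Δbar θbar : ℝ) (hρ : 0 < ρ) (hks : 0 ≤ k_s) (hΦM : 0 ≤ ΦM)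
    (hΔbar : 0 ≤ Δbar) (hθbar : 0 ≤ θbar)
    (θstar : EuclideanSpace ℝ (Fin Ξ)) (hθstar : ‖θstar‖ ≤ θbar)
    (e : ℝ → EuclideanSpace ℝ (Fin n)) (θhat : ℝ → EuclideanSpace ℝ (Fin Ξ))
    (Φ' : ℝ → (EuclideanSpace ℝ (Fin Ξ) →L[ℝ] EuclideanSpace ℝ (Fin n)))
    (Δ : ℝ → EuclideanSpace ℝ (Fin n))
    (hΦ'bdd : ∀ t ≥ (0 : ℝ), ‖Φ' t‖ ≤ ΦM) (hΔbdd : ∀ t ≥ (0 : ℝ), ‖Δ t‖ ≤ Δbar)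
    (hdyn : ∀ t ≥ (0 : ℝ), HasDerivAt e
      (A_c (e t) - k_s • signVec (e t) + Φ' t (θstar - θhat t) + Δ t) t)
    (hadapt : ∀ t ≥ (0 : ℝ), HasDerivAt θhat
      (-(Γ ((((A_c.symm : EuclideanSpace ℝ (Fin n) →L[ℝ] EuclideanSpace ℝ (Fin n)).comp
          (Φ' t)).adjoint) (e t)))
        - (ρ * ‖e t‖) • θhat t) t)
    (β₂ : ℝ)
    (hβ₂ : β₂ = (ΦM * (‖(A_c.symm : EuclideanSpace ℝ (Fin n) →L[ℝ] EuclideanSpace ℝ (Fin n))‖ + 1)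
        + ρ * γbar * θbar) / (2 * (ρ * μ)))
    (hgain : ρ * μ * β₂ ^ 2 + Δbar ≤ k_s) :
    Filter.Tendsto e Filter.atTop (nhds 0) := by
  classical
  set Ai : ℝ := ‖(A_c.symm : EuclideanSpace ℝ (Fin n) →L[ℝ] EuclideanSpace ℝ (Fin n))‖ with hAidef
  have hAi0 : 0 ≤ Ai := norm_nonneg _
  set w : ℝ → EuclideanSpace ℝ (Fin Ξ) := fun t => θstar - θhat t with hwdef
  set eD : ℝ → EuclideanSpace ℝ (Fin n) := fun t =>
    A_c (e t) - k_s • signVec (e t) + Φ' t (w t) + Δ t with heDdef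
  set wD : ℝ → EuclideanSpace ℝ (Fin Ξ) := fun t =>
    Γ ((((A_c.symm : EuclideanSpace ℝ (Fin n) →L[ℝ] EuclideanSpace ℝ (Fin n)).comp
        (Φ' t)).adjoint) (e t)) + (ρ * ‖e t‖) • θhat t with hwDdef
  have he' : ∀ t ≥ (0:ℝ), HasDerivAt e (eD t) t := by
    intro t ht
    simpa only [heDdef, hwdef] using hdyn t ht
  have hw' : ∀ t ≥ (0:ℝ), HasDerivAt w (wD t) t := by
    intro t ht
    have h := (hasDerivAt_const t θstar).sub (hadapt t ht)
    simp only [hwdef, hwDdef]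
    exact h.congr_deriv (by abel)
  set V : ℝ → ℝ := fun t => (1/2) * ⟪e t, e t⟫ + (1/2) * ⟪w t, Γ.symm (w t)⟫ with hVdef
  set VD : ℝ → ℝ := fun t => ⟪e t, eD t⟫ + ⟪w t, Γ.symm (wD t)⟫ with hVDdef
  have hGsymm' : ∀ a b : EuclideanSpace ℝ (Fin Ξ), ⟪Γ.symm a, b⟫ = ⟪a, Γ.symm b⟫ := by
    intro a b
    have h := hΓsymm (Γ.symm a) (Γ.symm b)
    simpa using h.symm
  have hVder : ∀ t ≥ (0:ℝ), HasDerivAt V (VD t) t := by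
    intro t ht
    have he := he' t ht
    have hwt := hw' t ht
    have hGw : HasDerivAt (fun s => Γ.symm (w s)) (Γ.symm (wD t)) t :=
      (Γ.symm : EuclideanSpace ℝ (Fin Ξ) →L[ℝ]
        EuclideanSpace ℝ (Fin Ξ)).hasFDerivAt.comp_hasDerivAt t hwt
    have h1 := (he.inner ℝ he).const_mul (1/2 : ℝ)
    have h2 := (hwt.inner ℝ hGw).const_mul (1/2 : ℝ)
    have h3 := h1.add h2
    simp only [hVdef, hVDdef]
    refine h3.congr_deriv ?_
    have e1 : ⟪eD t, e t⟫ = ⟪e t, eD t⟫ := real_inner_comm _ _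
    have e2 : ⟪wD t, Γ.symm (w t)⟫ = ⟪w t, Γ.symm (wD t)⟫ :=
      (hGsymm' (wD t) (w t)).symm.trans (real_inner_comm _ _)
    rw [e1, e2]; ring
  have hVe : ∀ t, ‖e t‖^2 ≤ 2 * V t := by
    intro t
    have h := hμΓ (w t)
    have h0 : 0 ≤ ⟪w t, Γ.symm (w t)⟫ := le_trans (by positivity) h
    simp only [hVdef]
    rw [real_inner_self_eq_norm_sq]
    linarith
  have hVw : ∀ t, μ * ‖w t‖^2 ≤ 2 * V t := by
    intro t
    have h := hμΓ (w t)
    have h0 : (0:ℝ) ≤ ⟪e t, e t⟫ := real_inner_self_nonneg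
    simp only [hVdef]
    linarith
  have hVnonneg : ∀ t, 0 ≤ V t := by
    intro t
    have := hVe t
    nlinarith [sq_nonneg ‖e t‖]
  -- the key Lyapunov derivative inequality
  have hVDle : ∀ t ≥ (0:ℝ), VD t ≤ -lam * ‖e t‖^2 := by
    intro t ht
    have hs0 : (0:ℝ) ≤ ‖e t‖ := norm_nonneg _
    have hw0 : (0:ℝ) ≤ ‖w t‖ := norm_nonneg _
    have hρs : (0:ℝ) ≤ ρ * ‖e t‖ := by positivity
    have hθh : θhat t = θstar - w t := by simp [hwdef]
    have hGwD : Γ.symm (wD t)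
        = (((A_c.symm : EuclideanSpace ℝ (Fin n) →L[ℝ] EuclideanSpace ℝ (Fin n)).comp
            (Φ' t)).adjoint) (e t)
          + (ρ * ‖e t‖) • (Γ.symm θstar - Γ.symm (w t)) := by
      simp only [hwDdef, hθh, map_add, map_smul, map_sub, ContinuousLinearEquiv.symm_apply_apply]
    have hexp : VD t = ⟪e t, A_c (e t)⟫ - k_s * ⟪e t, signVec (e t)⟫
        + ⟪e t, (Φ' t) (w t)⟫ + ⟪e t, Δ t⟫
        + ⟪w t, (((A_c.symm : EuclideanSpace ℝ (Fin n) →L[ℝ] EuclideanSpace ℝ (Fin n)).comp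
            (Φ' t)).adjoint) (e t)⟫
        + (ρ * ‖e t‖) * ⟪w t, Γ.symm θstar⟫
        - (ρ * ‖e t‖) * ⟪w t, Γ.symm (w t)⟫ := by
      simp only [hVDdef, heDdef, hGwD, inner_add_right, inner_sub_right,
        real_inner_smul_right]
      ring
    -- individual bounds
    have hb1 : k_s * ‖e t‖ ≤ k_s * ⟪e t, signVec (e t)⟫ :=
      mul_le_mul_of_nonneg_left (norm_le_inner_signVec _) hks
    have hb2 : ⟪e t, (Φ' t) (w t)⟫ ≤ ‖e t‖ * (ΦM * ‖w t‖) := by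
      calc ⟪e t, (Φ' t) (w t)⟫ ≤ ‖e t‖ * ‖(Φ' t) (w t)‖ := real_inner_le_norm _ _
        _ ≤ ‖e t‖ * (‖Φ' t‖ * ‖w t‖) :=
            mul_le_mul_of_nonneg_left ((Φ' t).le_opNorm _) hs0
        _ ≤ ‖e t‖ * (ΦM * ‖w t‖) := by
            apply mul_le_mul_of_nonneg_left _ hs0
            exact mul_le_mul_of_nonneg_right (hΦ'bdd t ht) hw0
    have hb3 : ⟪e t, Δ t⟫ ≤ ‖e t‖ * Δbar := by
      calc ⟪e t, Δ t⟫ ≤ ‖e t‖ * ‖Δ t‖ := real_inner_le_norm _ _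
        _ ≤ ‖e t‖ * Δbar := mul_le_mul_of_nonneg_left (hΔbdd t ht) hs0
    have hBnorm : ‖(((A_c.symm : EuclideanSpace ℝ (Fin n) →L[ℝ] EuclideanSpace ℝ (Fin n)).comp
        (Φ' t)).adjoint)‖ ≤ Ai * ΦM := by
      rw [LinearIsometryEquiv.norm_map]
      calc ‖(A_c.symm : EuclideanSpace ℝ (Fin n) →L[ℝ] EuclideanSpace ℝ (Fin n)).comp (Φ' t)‖
          ≤ Ai * ‖Φ' t‖ := ContinuousLinearMap.opNorm_comp_le _ _
        _ ≤ Ai * ΦM := mul_le_mul_of_nonneg_left (hΦ'bdd t ht) hAi0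
    have hb4 : ⟪w t, (((A_c.symm : EuclideanSpace ℝ (Fin n) →L[ℝ] EuclideanSpace ℝ (Fin n)).comp
        (Φ' t)).adjoint) (e t)⟫ ≤ ‖w t‖ * (Ai * ΦM * ‖e t‖) := by
      calc ⟪w t, _⟫ ≤ ‖w t‖ * ‖(((A_c.symm : EuclideanSpace ℝ (Fin n) →L[ℝ]
              EuclideanSpace ℝ (Fin n)).comp (Φ' t)).adjoint) (e t)‖ := real_inner_le_norm _ _
        _ ≤ ‖w t‖ * (Ai * ΦM * ‖e t‖) := by
            apply mul_le_mul_of_nonneg_left _ hw0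
            calc ‖(((A_c.symm : EuclideanSpace ℝ (Fin n) →L[ℝ]
                  EuclideanSpace ℝ (Fin n)).comp (Φ' t)).adjoint) (e t)‖
                ≤ ‖(((A_c.symm : EuclideanSpace ℝ (Fin n) →L[ℝ]
                  EuclideanSpace ℝ (Fin n)).comp (Φ' t)).adjoint)‖ * ‖e t‖ :=
                  ContinuousLinearMap.le_opNorm _ _
              _ ≤ Ai * ΦM * ‖e t‖ := mul_le_mul_of_nonneg_right hBnorm hs0
    have hΓθ : ‖Γ.symm θstar‖ ≤ γbar * θbar := by
      calc ‖Γ.symm θstar‖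
          ≤ ‖(Γ.symm : EuclideanSpace ℝ (Fin Ξ) →L[ℝ] EuclideanSpace ℝ (Fin Ξ))‖ * ‖θstar‖ :=
            (Γ.symm : EuclideanSpace ℝ (Fin Ξ) →L[ℝ]
              EuclideanSpace ℝ (Fin Ξ)).le_opNorm θstar
        _ ≤ γbar * θbar := mul_le_mul hΓinv hθstar (norm_nonneg _) hγbar
    have hb5 : (ρ * ‖e t‖) * ⟪w t, Γ.symm θstar⟫ ≤ (ρ * ‖e t‖) * (‖w t‖ * (γbar * θbar)) := by
      apply mul_le_mul_of_nonneg_left _ hρs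
      calc ⟪w t, Γ.symm θstar⟫ ≤ ‖w t‖ * ‖Γ.symm θstar‖ := real_inner_le_norm _ _
        _ ≤ ‖w t‖ * (γbar * θbar) := mul_le_mul_of_nonneg_left hΓθ hw0
    have hb6 : (ρ * ‖e t‖) * (μ * ‖w t‖^2) ≤ (ρ * ‖e t‖) * ⟪w t, Γ.symm (w t)⟫ :=
      mul_le_mul_of_nonneg_left (hμΓ (w t)) hρs
    -- the bracket is nonpositive
    have hK : ΦM * (Ai + 1) + ρ * γbar * θbar = 2 * (ρ * μ) * β₂ := by
      rw [hβ₂]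
      have hne : 2 * (ρ * μ) ≠ 0 := by positivity
      field_simp
    have hbr : ΦM * (Ai + 1) * ‖w t‖ + ρ * γbar * θbar * ‖w t‖
        - ρ * μ * ‖w t‖^2 + Δbar - k_s ≤ 0 := by
      nlinarith [sq_nonneg (β₂ - ‖w t‖), mul_pos hρ hμ, hK, hgain]
    have hbr' : ‖e t‖ * (ΦM * (Ai + 1) * ‖w t‖ + ρ * γbar * θbar * ‖w t‖
        - ρ * μ * ‖w t‖^2 + Δbar - k_s) ≤ 0 :=
      mul_nonpos_of_nonneg_of_nonpos hs0 hbr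
    have hfin : VD t ≤ ⟪e t, A_c (e t)⟫ := by
      rw [hexp]
      linarith [hb1, hb2, hb3, hb4, hb5, hb6, hbr']
    exact hfin.trans (hAc (e t))
  -- V is nonincreasing on [0, ∞)
  have hVmono : ∀ a b : ℝ, 0 ≤ a → a ≤ b → V b ≤ V a := by
    intro a b ha hab
    have := mvt_le_aux (f := V) (f' := VD) (m := 0) hab
      (fun t ht => hVder t (le_trans ha ht.1))
      (fun t ht => le_trans (hVDle t (le_trans ha ht.1))
        (by nlinarith [sq_nonneg ‖e t‖]))
    linarith
  -- strict decrease while the error stays large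
  have hVdec : ∀ a b r : ℝ, 0 ≤ a → a ≤ b → 0 ≤ r → (∀ t ∈ Set.Icc a b, r ≤ ‖e t‖) →
      V b ≤ V a - lam * r^2 * (b - a) := by
    intro a b r ha hab hr0 hr
    have := mvt_le_aux (f := V) (f' := VD) (m := -(lam * r^2)) hab
      (fun t ht => hVder t (le_trans ha ht.1))
      (fun t ht => by
        have h1 := hVDle t (le_trans ha ht.1)
        have h2 := hr t ht
        have h3 : r^2 ≤ ‖e t‖^2 := pow_le_pow_left₀ hr0 h2 2
        have h4 : lam * r^2 ≤ lam * ‖e t‖^2 := mul_le_mul_of_nonneg_left h3 hlam.le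
        linarith)
    linarith
  -- uniform bounds
  set M1 : ℝ := Real.sqrt (2 * V 0) with hM1def
  set M2 : ℝ := Real.sqrt (2 * V 0 / μ) with hM2def
  have hM1 : ∀ t, 0 ≤ t → ‖e t‖ ≤ M1 := by
    intro t ht
    have h1 : ‖e t‖^2 ≤ 2 * V 0 := (hVe t).trans (by linarith [hVmono 0 t le_rfl ht])
    calc ‖e t‖ = Real.sqrt (‖e t‖^2) := (Real.sqrt_sq (norm_nonneg _)).symm
      _ ≤ M1 := Real.sqrt_le_sqrt h1
  have hM2 : ∀ t, 0 ≤ t → ‖w t‖ ≤ M2 := by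
    intro t ht
    have h1 : μ * ‖w t‖^2 ≤ 2 * V 0 := (hVw t).trans (by linarith [hVmono 0 t le_rfl ht])
    have h2 : ‖w t‖^2 ≤ 2 * V 0 / μ := by
      rw [le_div_iff₀ hμ]; linarith
    calc ‖w t‖ = Real.sqrt (‖w t‖^2) := (Real.sqrt_sq (norm_nonneg _)).symm
      _ ≤ M2 := Real.sqrt_le_sqrt h2
  set L : ℝ := ‖(A_c : EuclideanSpace ℝ (Fin n) →L[ℝ] EuclideanSpace ℝ (Fin n))‖ * M1
      + k_s * Real.sqrt n + ΦM * M2 + Δbar with hLdef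
  have heDb : ∀ t, 0 ≤ t → ‖eD t‖ ≤ L := by
    intro t ht
    have hA : ‖A_c (e t)‖
        ≤ ‖(A_c : EuclideanSpace ℝ (Fin n) →L[ℝ] EuclideanSpace ℝ (Fin n))‖ * M1 := by
      calc ‖A_c (e t)‖
          ≤ ‖(A_c : EuclideanSpace ℝ (Fin n) →L[ℝ] EuclideanSpace ℝ (Fin n))‖ * ‖e t‖ :=
            (A_c : EuclideanSpace ℝ (Fin n) →L[ℝ] EuclideanSpace ℝ (Fin n)).le_opNorm (e t)
        _ ≤ _ := mul_le_mul_of_nonneg_left (hM1 t ht) (norm_nonneg _)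
    have hsgn : ‖k_s • signVec (e t)‖ ≤ k_s * Real.sqrt n := by
      rw [norm_smul, Real.norm_eq_abs, abs_of_nonneg hks]
      exact mul_le_mul_of_nonneg_left (norm_signVec_le _) hks
    have hP : ‖(Φ' t) (w t)‖ ≤ ΦM * M2 := by
      calc ‖(Φ' t) (w t)‖ ≤ ‖Φ' t‖ * ‖w t‖ := (Φ' t).le_opNorm _
        _ ≤ ΦM * M2 := mul_le_mul (hΦ'bdd t ht) (hM2 t ht) (norm_nonneg _) hΦM
    have h0 : ‖eD t‖ ≤ ‖A_c (e t)‖ + ‖k_s • signVec (e t)‖ + ‖(Φ' t) (w t)‖ + ‖Δ t‖ := by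
      simp only [heDdef]
      calc ‖A_c (e t) - k_s • signVec (e t) + (Φ' t) (w t) + Δ t‖
          ≤ ‖A_c (e t) - k_s • signVec (e t) + (Φ' t) (w t)‖ + ‖Δ t‖ := norm_add_le _ _
        _ ≤ ‖A_c (e t) - k_s • signVec (e t)‖ + ‖(Φ' t) (w t)‖ + ‖Δ t‖ := by
            have := norm_add_le (A_c (e t) - k_s • signVec (e t)) ((Φ' t) (w t))
            linarith
        _ ≤ ‖A_c (e t)‖ + ‖k_s • signVec (e t)‖ + ‖(Φ' t) (w t)‖ + ‖Δ t‖ := by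
            have := norm_sub_le (A_c (e t)) (k_s • signVec (e t))
            linarith
    have hD := hΔbdd t ht
    rw [hLdef]
    linarith
  set LL : ℝ := max L 1 with hLLdef
  have hLL0 : (0:ℝ) < LL := lt_of_lt_of_le one_pos (le_max_right _ _)
  have heDb' : ∀ t, 0 ≤ t → ‖eD t‖ ≤ LL := fun t ht => (heDb t ht).trans (le_max_left _ _)
  have hLip : ∀ a b : ℝ, 0 ≤ a → a ≤ b → ‖e b - e a‖ ≤ LL * (b - a) := by
    intro a b ha hab
    have h := Convex.norm_image_sub_le_of_norm_hasDerivWithin_le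
      (f := e) (f' := eD) (s := Set.Icc a b) (C := LL)
      (fun t ht => (he' t (le_trans ha ht.1)).hasDerivWithinAt)
      (fun t ht => heDb' t (le_trans ha ht.1)) (convex_Icc a b)
      (Set.left_mem_Icc.2 hab) (Set.right_mem_Icc.2 hab)
    simpa [Real.norm_eq_abs, abs_of_nonneg (sub_nonneg.2 hab)] using h
  -- Barbalat-type argument, by contradiction
  by_contra hcon
  rw [Metric.tendsto_atTop] at hcon
  push_neg at hcon
  obtain ⟨ε, hε, hfr⟩ := hcon
  have hfr' : ∀ N : ℝ, ∃ t ≥ N, ε ≤ ‖e t‖ := by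
    intro N
    obtain ⟨t, ht1, ht2⟩ := hfr N
    exact ⟨t, ht1, by simpa [dist_zero_right] using ht2⟩
  set δ : ℝ := ε / (2 * LL) with hδdef
  have hδ : 0 < δ := by positivity
  set c : ℝ := lam * (ε/2)^2 * δ with hcdef
  have hc : 0 < c := by positivity
  have claim : ∀ t : ℝ, δ ≤ t → ε ≤ ‖e t‖ → V t ≤ V (t - δ) - c := by
    intro t ht hεt
    have ha : 0 ≤ t - δ := by linarith
    have hr : ∀ s ∈ Set.Icc (t - δ) t, ε/2 ≤ ‖e s‖ := by
      intro s hs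
      have h1 : ‖e t - e s‖ ≤ LL * (t - s) := hLip s t (le_trans ha hs.1) hs.2
      have h2 : LL * (t - s) ≤ LL * δ := by
        apply mul_le_mul_of_nonneg_left _ hLL0.le
        have := hs.1; linarith
      have h3 : LL * δ = ε / 2 := by
        rw [hδdef]; field_simp
      have h4 : ‖e t‖ - ‖e s‖ ≤ ‖e t - e s‖ := norm_sub_norm_le _ _
      linarith
    have h := hVdec (t - δ) t (ε/2) ha (by linarith) (by positivity) hr
    have heq : lam * (ε/2)^2 * (t - (t - δ)) = c := by rw [hcdef]; ring
    linarith [heq ▸ h]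
  have key : ∀ k : ℕ, ∃ t : ℝ, 0 ≤ t ∧ V t ≤ V 0 - k * c := by
    intro k
    induction k with
    | zero => exact ⟨0, le_rfl, by simp⟩
    | succ k ih =>
      obtain ⟨t0, ht0, hVt0⟩ := ih
      obtain ⟨t, ht1, ht2⟩ := hfr' (t0 + δ)
      have hδt : δ ≤ t := by linarith
      have h1 := claim t hδt ht2
      have h2 : V (t - δ) ≤ V t0 := hVmono t0 (t - δ) ht0 (by linarith)
      refine ⟨t, by linarith, ?_⟩
      push_cast
      linarith
  obtain ⟨k, hk⟩ := exists_nat_gt (V 0 / c)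
  obtain ⟨t, ht, hVt⟩ := key k
  have h1 : V 0 < k * c := (div_lt_iff₀ hc).1 hk
  have h2 := hVnonneg t
  linarith
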